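/- Let G be a finite group with a DRAD difference set D and subgroup H of order h (so |G| = h²). Then every nontrivial coset Hg ≠ H satisfies |D ∩ Hg| = h/2. -/

import Mathlib

open Finset

/-- `D` is a `(v, |D|, l)`-difference set in `G`: every nonidentity element of `G`
occurs exactly `l` times as a quotient `x * y⁻¹` with `x, y ∈ D`. -/
def IsDiffSet {G : Type*} [Group G] [DecidableEq G] (D : Finset G) (l : ℕ) : Prop :=
  ∀ g : G, g ≠ 1 → ((D ×ˢ D).filter (fun q => q.1 * q.2⁻¹ = g)).card = l

/-- `D` is a DRAD difference set in `G` with subgroup `H`: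
`D ∩ D⁻¹ = ∅`, `G \ (D ∪ D⁻¹) = H`, and `D` is a difference set with parameter `l`. -/
def IsDRAD {G : Type*} [Group G] [DecidableEq G] (D : Finset G) (H : Subgroup G) (l : ℕ) : Prop :=
  (∀ g ∈ D, g⁻¹ ∉ D) ∧ (∀ g : G, g ∈ H ↔ (g ∉ D ∧ g⁻¹ ∉ D)) ∧ IsDiffSet D l

lemma arith_aux (h v d m : ℤ) (h2 : 2 ≤ h) (hv : 2*h ≤ v) (hm : v = h * m)
    (hd : h^2 - 1 = (v - 1)*d) : v = h^2 := by
  have hd1 : 1 ≤ d := by nlinarith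
  have hle : v ≤ h^2 := by nlinarith
  by_contra hne
  have hlt : v < h^2 := lt_of_le_of_ne hle hne
  have hd2 : 2 ≤ d := by nlinarith
  have hdvd : d - 1 = h * (m*d - h) := by linear_combination hd + d*hm
  have ht1 : 1 ≤ m*d - h := by nlinarith [hdvd]
  have hdh : h + 1 ≤ d := by
    nlinarith [mul_le_mul_of_nonneg_left ht1 (by linarith : (0:ℤ) ≤ h)]
  nlinarith [mul_le_mul (show (2*h-1:ℤ) ≤ v-1 by linarith) hdh
    (by linarith : (0:ℤ) ≤ h+1) (by linarith : (0:ℤ) ≤ v-1)]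

theorem stmt2 {G : Type*} [Group G] [Fintype G] [DecidableEq G]
    (H : Subgroup G) [H.Normal] (hH : H ≠ ⊥)
    (D : Finset G) (l h : ℕ) (hh : h = Nat.card H)
    (hD : IsDRAD D H l) [DecidablePred (· ∈ H)] :
    ∀ g : G, g ∉ H → (D.filter (fun d => d * g⁻¹ ∈ H)).card = h / 2 := by
  intro g hg
  obtain ⟨hasym, hpart, hdiff⟩ := hD
  set v := Fintype.card G with hv
  set k := D.card with hk
  let A : G → ℕ := fun x => (D.filter (fun d => d * x⁻¹ ∈ H)).card
  set S : Finset G := univ.filter (fun x : G => x ∉ H) with hSdef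
  -- basic cardinalities
  have hHf : (univ.filter (fun x : G => x ∈ H)).card = h := by
    rw [hh, Nat.card_eq_fintype_card, Fintype.card_subtype]
  have hHf1 : (1:G) ∈ univ.filter (fun x : G => x ∈ H) := by
    simp [H.one_mem]
  have hDnotH : ∀ d ∈ D, d ∉ H := fun d hd hdH => ((hpart d).mp hdH).1 hd
  -- diagonal count
  have hdiag : ((D ×ˢ D).filter (fun q : G × G => q.1 * q.2⁻¹ = 1)).card = k := by
    have himg : (D ×ˢ D).filter (fun q : G × G => q.1 * q.2⁻¹ = 1)
        = D.image (fun x => (x, x)) := by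
      ext ⟨a, b⟩
      simp only [mem_filter, mem_product, mem_image, mul_inv_eq_one, Prod.mk.injEq]
      constructor
      · rintro ⟨⟨ha, _⟩, rfl⟩; exact ⟨a, ha, rfl, rfl⟩
      · rintro ⟨x, hx, rfl, rfl⟩; exact ⟨⟨hx, hx⟩, rfl⟩
    rw [himg, Finset.card_image_of_injective _
      (fun a b hab => (Prod.mk.injEq _ _ _ _).mp hab |>.1)]
  -- global count: k + (v-1)*l = k*k
  have hcount : k + (v - 1) * l = k * k := by
    have h1 : (D ×ˢ D).card
        = ∑ b ∈ (univ : Finset G), ((D ×ˢ D).filter (fun q => q.1 * q.2⁻¹ = b)).card :=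
      Finset.card_eq_sum_card_fiberwise (fun x _ => Finset.mem_univ _)
    have h2 : ∑ b ∈ (univ : Finset G), ((D ×ˢ D).filter (fun q => q.1 * q.2⁻¹ = b)).card
        = ((D ×ˢ D).filter (fun q => q.1 * q.2⁻¹ = 1)).card
          + ∑ b ∈ (univ : Finset G).erase 1,
              ((D ×ˢ D).filter (fun q => q.1 * q.2⁻¹ = b)).card :=
      (Finset.add_sum_erase _ _ (Finset.mem_univ 1)).symm
    have h3 : ∑ b ∈ (univ : Finset G).erase 1,
        ((D ×ˢ D).filter (fun q => q.1 * q.2⁻¹ = b)).card = (v - 1) * l := by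
      rw [Finset.sum_congr rfl (fun b hb => hdiff b (Finset.ne_of_mem_erase hb)),
        Finset.sum_const, smul_eq_mul, Finset.card_erase_of_mem (Finset.mem_univ _),
        Finset.card_univ]
    rw [Finset.card_product, h2, hdiag, h3] at h1
    exact h1.symm
  -- sum over D of A equals k + (h-1)*l
  have hT : ∑ y ∈ D, A y = k + (h - 1) * l := by
    have p1 : ((D ×ˢ D).filter (fun q : G × G => q.1 * q.2⁻¹ ∈ H)).card = ∑ y ∈ D, A y := by
      rw [Finset.card_filter, Finset.sum_product, Finset.sum_comm]
      exact Finset.sum_congr rfl (fun y _ => (Finset.card_filter _ _).symm)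
    have p2 : ((D ×ˢ D).filter (fun q : G × G => q.1 * q.2⁻¹ ∈ H)).card = k + (h - 1) * l := by
      have h1 : ((D ×ˢ D).filter (fun q : G × G => q.1 * q.2⁻¹ ∈ H)).card
          = ∑ b ∈ univ.filter (fun x : G => x ∈ H),
              (((D ×ˢ D).filter (fun q : G × G => q.1 * q.2⁻¹ ∈ H)).filter
                (fun q => q.1 * q.2⁻¹ = b)).card :=
        Finset.card_eq_sum_card_fiberwise (fun x hx => by
          simp only [Finset.mem_coe, mem_filter, mem_univ, true_and] at hx ⊢
          exact hx.2)
      have h2 : ∀ b ∈ univ.filter (fun x : G => x ∈ H),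
          ((D ×ˢ D).filter (fun q : G × G => q.1 * q.2⁻¹ ∈ H)).filter
              (fun q => q.1 * q.2⁻¹ = b)
            = (D ×ˢ D).filter (fun q => q.1 * q.2⁻¹ = b) := by
        intro b hb
        simp only [mem_filter, mem_univ, true_and] at hb
        ext q
        simp only [mem_filter, and_assoc]
        constructor
        · rintro ⟨hq, _, he⟩; exact ⟨hq, he⟩
        · rintro ⟨hq, he⟩; exact ⟨hq, he ▸ hb, he⟩
      rw [Finset.sum_congr rfl (fun b hb => congrArg Finset.card (h2 b hb))] at h1
      rw [← Finset.add_sum_erase _ _ hHf1] at h1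
      have h3 : ∑ b ∈ (univ.filter (fun x : G => x ∈ H)).erase 1,
          ((D ×ˢ D).filter (fun q => q.1 * q.2⁻¹ = b)).card = (h - 1) * l := by
        rw [Finset.sum_congr rfl (fun b hb => hdiff b (Finset.ne_of_mem_erase hb)),
          Finset.sum_const, smul_eq_mul, Finset.card_erase_of_mem hHf1, hHf]
      rw [hdiag, h3] at h1
      exact h1
    exact p1.symm.trans p2
  -- coset cards within S
  have hScoset : ∀ d : G, d ∉ H → (S.filter (fun x => d * x⁻¹ ∈ H)).card = h := by
    intro d hd
    have hsub : S.filter (fun x => d * x⁻¹ ∈ H) = univ.filter (fun x : G => d * x⁻¹ ∈ H) := by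
      ext x
      simp only [hSdef, Finset.filter_filter, mem_filter, mem_univ, true_and]
      constructor
      · rintro ⟨_, hx⟩; exact hx
      · intro hx
        refine ⟨fun hxH => hd ?_, hx⟩
        have := H.mul_mem hx hxH
        rwa [inv_mul_cancel_right] at this
    rw [hsub]
    have himg : univ.filter (fun x : G => d * x⁻¹ ∈ H)
        = (univ.filter (fun s : G => s ∈ H)).image (fun s => s⁻¹ * d) := by
      ext x
      simp only [mem_filter, mem_image, mem_univ, true_and]
      constructor
      · intro hx; exact ⟨d * x⁻¹, hx, by group⟩
      · rintro ⟨s, hs, rfl⟩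
        rw [show d * (s⁻¹ * d)⁻¹ = s by group]; exact hs
    rw [himg, Finset.card_image_of_injective _
      (fun a b hab => inv_injective (mul_right_cancel hab)), hHf]
  -- first moment
  have hsumA : ∑ x ∈ S, A x = k * h := by
    calc ∑ x ∈ S, A x = ∑ x ∈ S, ∑ d ∈ D, (if d * x⁻¹ ∈ H then 1 else 0) :=
          Finset.sum_congr rfl (fun x _ => Finset.card_filter _ _)
      _ = ∑ d ∈ D, ∑ x ∈ S, (if d * x⁻¹ ∈ H then 1 else 0) := Finset.sum_comm
      _ = ∑ d ∈ D, (S.filter (fun x => d * x⁻¹ ∈ H)).card :=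
          Finset.sum_congr rfl (fun d _ => (Finset.card_filter _ _).symm)
      _ = ∑ d ∈ D, h := Finset.sum_congr rfl (fun d hd => hScoset d (hDnotH d hd))
      _ = k * h := by rw [Finset.sum_const, smul_eq_mul]
  -- A constant on cosets
  have hAconst : ∀ d x : G, d * x⁻¹ ∈ H → A d = A x := by
    intro d x hdx
    have hfe : (D.filter (fun y => y * d⁻¹ ∈ H)) = (D.filter (fun y => y * x⁻¹ ∈ H)) := by
      ext y
      simp only [mem_filter, and_congr_right_iff]
      intro _
      constructor
      · intro hy
        have := H.mul_mem hy hdx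
        rwa [show y * d⁻¹ * (d * x⁻¹) = y * x⁻¹ by group] at this
      · intro hy
        have := H.mul_mem hy (H.inv_mem hdx)
        rwa [show y * x⁻¹ * (d * x⁻¹)⁻¹ = y * d⁻¹ by group] at this
    exact congrArg Finset.card hfe
  -- second moment
  have hsumA2 : ∑ x ∈ S, A x * A x = h * (∑ y ∈ D, A y) := by
    calc ∑ x ∈ S, A x * A x
        = ∑ x ∈ S, ∑ d ∈ D, (if d * x⁻¹ ∈ H then A d else 0) := by
          refine Finset.sum_congr rfl (fun x _ => ?_)
          rw [← Finset.sum_filter,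
            Finset.sum_congr rfl (fun d hd => hAconst d x (Finset.mem_filter.mp hd).2),
            Finset.sum_const, smul_eq_mul]
      _ = ∑ d ∈ D, ∑ x ∈ S, (if d * x⁻¹ ∈ H then A d else 0) := Finset.sum_comm
      _ = ∑ d ∈ D, h * A d := by
          refine Finset.sum_congr rfl (fun d hd => ?_)
          rw [← Finset.sum_filter, Finset.sum_const, smul_eq_mul, hScoset d (hDnotH d hd)]
      _ = h * (∑ y ∈ D, A y) := by rw [Finset.mul_sum]
  -- partition: S.card = 2k, v = h + 2k
  have hS2k : S.card = k + k := by
    have hSeq : S = D ∪ D.image (fun x => x⁻¹) := by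
      ext x
      simp only [hSdef, mem_filter, mem_univ, true_and, Finset.mem_union, Finset.mem_image]
      constructor
      · intro hx
        by_cases hxD : x ∈ D
        · exact Or.inl hxD
        · have hxi : x⁻¹ ∈ D := by
            by_contra hxi
            exact hx ((hpart x).mpr ⟨hxD, hxi⟩)
          exact Or.inr ⟨x⁻¹, hxi, inv_inv x⟩
      · rintro (hxD | ⟨a, ha, rfl⟩) hxH
        · exact ((hpart x).mp hxH).1 hxD
        · exact ((hpart a⁻¹).mp hxH).2 (by simpa using ha)
    rw [hSeq, Finset.card_union_of_disjoint, Finset.card_image_of_injective _ inv_injective]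
    rw [Finset.disjoint_left]
    rintro a haD haI
    obtain ⟨b, hb, rfl⟩ := Finset.mem_image.mp haI
    exact hasym b hb haD
  have hvcard : h + S.card = v := by
    rw [← hHf, hv, ← Finset.card_univ]
    exact Finset.card_filter_add_card_filter_not _
  have hv2k : v = h + 2 * k := by omega
  have hS2k' : S.card = 2 * k := by omega
  -- h ≥ 2
  have hh2 : 2 ≤ h := by
    rw [hh]
    exact (Subgroup.one_lt_card_iff_ne_bot (H := H)).mpr hH
  -- 2h ≤ v and h ∣ v
  have hind : Nat.card H * H.index = v := by
    rw [hv, ← Nat.card_eq_fintype_card]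
    exact Subgroup.card_mul_index H
  have hHne : H ≠ ⊤ := fun e => hg (e ▸ Subgroup.mem_top g)
  have hidx2 : 2 ≤ H.index := by
    have h0 : H.index ≠ 0 := Subgroup.index_ne_zero_of_finite
    have h1 : H.index ≠ 1 := fun e => hHne (Subgroup.index_eq_one.mp e)
    omega
  have h2v : 2 * h ≤ v := by
    calc 2 * h = h * 2 := by ring
    _ ≤ h * H.index := Nat.mul_le_mul_left _ hidx2
    _ = v := by rw [hh]; exact hind
  have hdvdv : h ∣ v := by
    rw [hh]; exact ⟨H.index, hind.symm⟩
  have hv1 : 1 ≤ v := Fintype.card_pos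
  -- integer versions
  have z1 : (l : ℤ) * ((v : ℤ) - 1) = (k : ℤ) * k - k := by
    have := congrArg (fun n : ℕ => (n : ℤ)) hcount
    push_cast [Nat.cast_sub hv1] at this
    linarith
  have z2 : (v : ℤ) = (h : ℤ) + 2 * k := by exact_mod_cast hv2k
  -- v = h^2
  obtain ⟨m, hm⟩ := hdvdv
  have hvZ : (v : ℤ) = (h : ℤ)^2 := by
    refine arith_aux h v (4*l - ((v : ℤ) - 2*h - 1)) m (by exact_mod_cast hh2)
      (by exact_mod_cast h2v) (by exact_mod_cast hm) ?_
    linear_combination (-4 : ℤ) * z1 + ((v : ℤ) - h + 2*k - 2) * z2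
  -- final: sum of squares is zero
  have zsum1 : ∑ x ∈ S, (A x : ℤ) = (k : ℤ) * h := by exact_mod_cast hsumA
  have zsum2 : ∑ x ∈ S, (A x : ℤ) * (A x) = (h : ℤ) * ((k : ℤ) + ((h : ℤ) - 1) * l) := by
    have n2 : ∑ x ∈ S, A x * A x = h * (k + (h - 1) * l) := by rw [hsumA2, hT]
    have := congrArg (fun n : ℕ => (n : ℤ)) n2
    push_cast [Nat.cast_sub (show 1 ≤ h by omega)] at this
    exact this
  have zScard : ((S.card : ℕ) : ℤ) = 2 * k := by exact_mod_cast hS2k'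
  have hP : ∑ x ∈ S, (2 * (A x : ℤ) - h)^2 = 0 := by
    have e1 : ∑ x ∈ S, (2 * (A x : ℤ) - h)^2
        = 4 * (∑ x ∈ S, (A x : ℤ) * (A x)) - 4 * h * (∑ x ∈ S, (A x : ℤ))
          + (S.card : ℤ) * (h : ℤ)^2 := by
      rw [Finset.mul_sum, Finset.mul_sum, ← Finset.sum_sub_distrib]
      rw [show (S.card : ℤ) * (h : ℤ)^2 = ∑ _x ∈ S, (h : ℤ)^2 by
        rw [Finset.sum_const, nsmul_eq_mul]]
      rw [← Finset.sum_add_distrib]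
      exact Finset.sum_congr rfl (fun x _ => by ring)
    rw [e1, zsum1, zsum2, zScard]
    have hne : ((h : ℤ) + 1) ≠ 0 := by positivity
    have z1' : (l : ℤ) * ((h : ℤ)^2 - 1) = (k : ℤ) * k - k := by
      linear_combination z1 - (l : ℤ) * hvZ
    have z2' : 2 * (k : ℤ) = (h : ℤ)^2 - h := by linear_combination hvZ - z2
    have key : ((h : ℤ) + 1) *
        (4 * ((h : ℤ) * ((k : ℤ) + ((h : ℤ) - 1) * l)) - 4 * h * ((k : ℤ) * h)
          + 2 * k * (h : ℤ)^2) = 0 := by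
      linear_combination (4 * (h : ℤ)) * z1' + (2 * (h : ℤ) * k) * z2'
    exact (mul_eq_zero.mp key).resolve_left hne
  have hgS : g ∈ S := Finset.mem_filter.mpr ⟨Finset.mem_univ g, hg⟩
  have hterm : (2 * (A g : ℤ) - h)^2 = 0 :=
    (Finset.sum_eq_zero_iff_of_nonneg (fun x _ => sq_nonneg _)).mp hP g hgS
  have h2A : 2 * A g = h := by
    have h0 : 2 * (A g : ℤ) - h = 0 :=
      pow_eq_zero_iff (n := 2) (by norm_num) |>.mp hterm
    have h1 : 2 * (A g : ℤ) = h := by linarith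
    exact_mod_cast h1
  show A g = h / 2
  omega
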